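/- With notation as above, let F_i : Prim(H_R)^{⊗i} → H_R send p_i ⊗ ... ⊗ p_1 to p_i ⊤ ... ⊤ p_1. Then Δ̃^{i−1} ∘ F_i = Id on Prim(H_R)^{⊗i} (identifying Prim(H_R)^{⊗i} with its image in H_R^{⊗i}), and Δ̃^k ∘ F_i = 0 for k > i−1. Consequently each F_i is injective and the sum ℚ·1 + Σ_{i≥1} Im(F_i) is direct. -/

import Mathlib

open scoped TensorProduct

section

variable {H : Type} [CommRing H] [Bialgebra ℚ H]

/-- `segAux t q n a = q (a+n) ⊤ ... ⊤ q a`, the iterated natural growth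
(left-nested) for a bilinear operation `t`. -/
def segAux (t : H →ₗ[ℚ] H →ₗ[ℚ] H) (q : ℕ → H) : ℕ → ℕ → H
  | 0, a => q a
  | n + 1, a => t (segAux t q n (a + 1)) (q a)

/-- `seg t q a b = q_b ⊤ ... ⊤ q_a` for `a ≤ b`. -/
def seg (t : H →ₗ[ℚ] H →ₗ[ℚ] H) (q : ℕ → H) (a b : ℕ) : H :=
  segAux t q (b - a) a

/-- The reduced coproduct `Δ̃ = Δ − (x ↦ 1 ⊗ x) − (x ↦ x ⊗ 1)` as a linear map. -/
noncomputable def rcomulL : H →ₗ[ℚ] H ⊗[ℚ] H :=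
  Coalgebra.comul - (TensorProduct.mk ℚ H H 1 + (TensorProduct.mk ℚ H H).flip 1)

/-- The submodule of primitive elements of `H`. -/
noncomputable def PrimSub : Submodule ℚ H :=
  LinearMap.ker (Coalgebra.comul (R := ℚ) (A := H)
    - ((TensorProduct.mk ℚ H H).flip 1 + TensorProduct.mk ℚ H H 1))

/-- `Im t k` is `Im(F_k)`: the span of all `p_k ⊤ ... ⊤ p_1` with the `p_m`
primitive. -/
noncomputable def Im (t : H →ₗ[ℚ] H →ₗ[ℚ] H) (k : ℕ) : Submodule ℚ H :=
  Submodule.span ℚ {x : H | ∃ q : ℕ → H,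
    (∀ m, 1 ≤ m → m ≤ k → q m ∈ PrimSub) ∧ x = seg t q 1 k}

/-- The `(k+1)`-fold tensor power of `H`, nested on the left:
`TBundle 0 = H`, `TBundle (k+1) = TBundle k ⊗ H`. -/
noncomputable def TBundle : ℕ → ModuleCat ℚ
  | 0 => ModuleCat.of ℚ H
  | k + 1 => ModuleCat.of ℚ ((TBundle k : Type) ⊗[ℚ] H)

/-- The iterated reduced coproduct `Δ̃^k : H → H^{⊗(k+1)}`, with
`Δ̃^0 = Id − η∘ε` and `Δ̃^{k} = (Δ̃^{k−1} ⊗ Id) ∘ Δ̃`. -/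
noncomputable def Dtil : (k : ℕ) → H →ₗ[ℚ] (TBundle (H := H) k : Type)
  | 0 => LinearMap.id - ((Algebra.linearMap ℚ H) ∘ₗ Coalgebra.counit)
  | k + 1 => LinearMap.rTensor H (Dtil k) ∘ₗ rcomulL

/-- The pure tensor `q_k ⊗ ... ⊗ q_0` in the left-nested tensor power. -/
noncomputable def pt : (k : ℕ) → (Fin (k + 1) → H) → (TBundle (H := H) k : Type)
  | 0, q => q 0
  | k + 1, q => (pt k (fun m => q m.succ)) ⊗ₜ[ℚ] (q 0)

-- auxiliary lemmas

lemma Dtil_zero_apply (p : H) :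
    Dtil (H := H) 0 p = p - algebraMap ℚ H (Coalgebra.counit (R := ℚ) p) := rfl

lemma Dtil_succ_apply (k : ℕ) (x : H) :
    Dtil (H := H) (k + 1) x = LinearMap.rTensor H (Dtil k) (rcomulL x) := rfl

lemma pt_zero_apply (q : Fin 1 → H) : pt (H := H) 0 q = q 0 := rfl

lemma pt_succ_apply (k : ℕ) (q : Fin (k + 2) → H) :
    pt (H := H) (k + 1) q = (pt k (fun m => q m.succ)) ⊗ₜ[ℚ] (q 0) := rfl

-- primitive lemmas
lemma prim_comul {p : H} (hp : p ∈ PrimSub) :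
    Coalgebra.comul (R := ℚ) p = p ⊗ₜ[ℚ] 1 + 1 ⊗ₜ[ℚ] p := by
  have := hp
  simp only [PrimSub, LinearMap.mem_ker, LinearMap.sub_apply, LinearMap.add_apply, sub_eq_zero] at this
  simpa [TensorProduct.mk_apply] using this

lemma prim_rcomul {p : H} (hp : p ∈ PrimSub) : rcomulL p = 0 := by
  simp [rcomulL, prim_comul hp, TensorProduct.mk_apply]
  abel

lemma counit_algebraMap (c : ℚ) : Coalgebra.counit (R := ℚ) (A := H) (algebraMap ℚ H c) = c := by
  simpa using (Bialgebra.counitAlgHom ℚ H).commutes c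

lemma prim_counit {p : H} (hp : p ∈ PrimSub) : Coalgebra.counit (R := ℚ) p = 0 := by
  have h := Coalgebra.rTensor_counit_comul (R := ℚ) p
  rw [prim_comul hp] at h
  simp only [map_add, LinearMap.rTensor_tmul, Bialgebra.counit_one] at h
  have h2 : (Coalgebra.counit (R := ℚ) p) ⊗ₜ[ℚ] (1 : H) = 0 := by
    have := congrArg (fun z => z - (1:ℚ) ⊗ₜ[ℚ] p) h
    simpa using this
  have h3 := congrArg (TensorProduct.lid ℚ H) h2
  rw [LinearEquiv.map_zero] at h3
  rw [TensorProduct.lid_tmul] at h3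
  have h4 : algebraMap ℚ H (Coalgebra.counit (R := ℚ) p) = 0 := by
    rw [Algebra.algebraMap_eq_smul_one]; exact h3
  have := congrArg (Coalgebra.counit (R := ℚ) (A := H)) h4
  rwa [counit_algebraMap, map_zero] at this

lemma Dtil_zero_prim {p : H} (hp : p ∈ PrimSub) : Dtil 0 p = p := by
  rw [Dtil_zero_apply, prim_counit hp, map_zero, sub_zero]

lemma Dtil_one (k : ℕ) : Dtil (H := H) k 1 = 0 := by
  induction k with
  | zero =>
    rw [Dtil_zero_apply, Bialgebra.counit_one, map_one, sub_self]
    rfl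
  | succ k ih =>
    have h1 : rcomulL (1 : H) = - ((1 : H) ⊗ₜ[ℚ] (1 : H)) := by
      simp only [rcomulL, LinearMap.sub_apply, LinearMap.add_apply, Bialgebra.comul_one,
        TensorProduct.mk_apply, LinearMap.flip_apply, Algebra.TensorProduct.one_def]
      abel
    rw [Dtil_succ_apply, h1, map_neg, LinearMap.rTensor_tmul, ih, TensorProduct.zero_tmul,
      neg_zero]
    rfl



lemma segAux_shift (t : H →ₗ[ℚ] H →ₗ[ℚ] H) (q : ℕ → H) (s : ℕ) :
    ∀ n a, segAux t (fun m => q (m + s)) n a = segAux t q n (a + s) := by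
  intro n
  induction n with
  | zero => intro a; rfl
  | succ n ih =>
    intro a
    show t (segAux t (fun m => q (m + s)) n (a + 1)) (q (a + s))
      = t (segAux t q n (a + s + 1)) (q (a + s))
    rw [ih, Nat.add_right_comm]

lemma key (t : H →ₗ[ℚ] H →ₗ[ℚ] H)
    (hgrowth : ∀ (q : ℕ → H) (m : ℕ), 1 ≤ m →
      (∀ k, 1 ≤ k → k ≤ m → q k ∈ PrimSub) →
      rcomulL (seg t q 1 m)
        = ∑ j ∈ Finset.Icc 1 (m - 1), seg t q (j + 1) m ⊗ₜ[ℚ] seg t q 1 j) :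
    ∀ i : ℕ, ∀ q : ℕ → H, (∀ k, 1 ≤ k → k ≤ i + 1 → q k ∈ PrimSub) →
      (Dtil i (seg t q 1 (i + 1)) = pt i (fun m : Fin (i + 1) => q ((m : ℕ) + 1))) ∧
      (∀ k : ℕ, i < k → Dtil k (seg t q 1 (i + 1)) = 0) := by
  intro i
  induction i using Nat.strong_induction_on with
  | _ i IH =>
  intro q hq
  match i, IH with
  | 0, _ =>
    have hq1 : q 1 ∈ PrimSub := hq 1 le_rfl le_rfl
    have hseg : seg t q 1 1 = q 1 := rfl
    constructor
    · rw [hseg, Dtil_zero_prim hq1]; rfl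
    · intro k hk
      obtain ⟨k', rfl⟩ : ∃ k', k = k' + 1 := ⟨k - 1, by omega⟩
      rw [hseg, Dtil_succ_apply, prim_rcomul hq1, map_zero]
      rfl
  | i + 1, IH =>
    have hgw := hgrowth q (i + 2) (by omega) (fun k h1 h2 => hq k h1 (by omega))
    have hshift : ∀ j, 1 ≤ j → j ≤ i + 1 →
        seg t q (j + 1) (i + 2) = seg t (fun n => q (n + j)) 1 (i + 2 - j) := by
      intro j h1 h2
      show segAux t q (i + 2 - (j + 1)) (j + 1) = segAux t (fun n => q (n + j)) (i + 2 - j - 1) 1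
      rw [segAux_shift]
      congr 1 <;> omega
    have hsum : ∀ k' : ℕ, Dtil (k' + 1) (seg t q 1 (i + 2))
        = ∑ j ∈ Finset.Icc 1 (i + 1),
            (Dtil k' (seg t q (j + 1) (i + 2))) ⊗ₜ[ℚ] seg t q 1 j := by
      intro k'
      rw [Dtil_succ_apply, hgw, map_sum]
      apply Finset.sum_congr rfl
      intro j _
      exact LinearMap.rTensor_tmul _ _ _ _
    have hvanish : ∀ k' j, 1 ≤ j → j ≤ i + 1 → (i + 1 - j) < k' →
        Dtil k' (seg t q (j + 1) (i + 2)) = 0 := by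
      intro k' j h1 h2 hk
      rw [hshift j h1 h2]
      have hij : i + 2 - j = (i + 1 - j) + 1 := by omega
      rw [hij]
      refine (IH (i + 1 - j) (by omega) (fun n => q (n + j)) ?_).2 k' hk
      intro k hk1 hk2
      exact hq (k + j) (by omega) (by omega)
    constructor
    · rw [hsum i, Finset.sum_eq_single 1]
      · have h1 : seg t q 2 (i + 2) = seg t (fun n => q (n + 1)) 1 (i + 1) :=
          hshift 1 (by omega) (by omega)
        rw [h1, (IH i (by omega) (fun n => q (n + 1))
          (fun k hk1 hk2 => hq (k + 1) (by omega) (by omega))).1, pt_succ_apply]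
        have e1 : (fun m : Fin (i + 1) => q ((m : ℕ) + 1 + 1))
            = fun m : Fin (i + 1) => q (((m.succ : Fin (i + 2)) : ℕ) + 1) := by
          funext m
          simp [Fin.val_succ]
        have e2 : seg t q 1 1 = q (((0 : Fin (i + 2)) : ℕ) + 1) := rfl
        rw [e1, e2]
      · intro j hj hne
        obtain ⟨hj1, hj2⟩ := Finset.mem_Icc.mp hj
        rw [hvanish i j hj1 hj2 (by omega)]
        exact TensorProduct.zero_tmul _ _
      · intro h
        exact absurd (Finset.mem_Icc.mpr ⟨le_rfl, by omega⟩) h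
    · intro k hk
      obtain ⟨k', rfl⟩ : ∃ k', k = k' + 1 := ⟨k - 1, by omega⟩
      rw [hsum k']
      apply Finset.sum_eq_zero
      intro j hj
      obtain ⟨hj1, hj2⟩ := Finset.mem_Icc.mp hj
      rw [hvanish k' j hj1 hj2 (by omega)]
      exact TensorProduct.zero_tmul _ _



noncomputable def Gmap (t : H →ₗ[ℚ] H →ₗ[ℚ] H) :
    (k : ℕ) → (TBundle (H := H) k : Type) →ₗ[ℚ] H
  | 0 => LinearMap.id
  | k + 1 => TensorProduct.lift (t ∘ₗ Gmap t k)

lemma Gmap_zero_apply (t : H →ₗ[ℚ] H →ₗ[ℚ] H) (x : H) : Gmap t 0 x = x := rfl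

lemma Gmap_succ_apply (t : H →ₗ[ℚ] H →ₗ[ℚ] H) (k : ℕ) (x : (TBundle (H := H) k : Type))
    (h : H) : Gmap t (k + 1) (x ⊗ₜ[ℚ] h) = t (Gmap t k x) h := rfl

lemma Gmap_pt (t : H →ₗ[ℚ] H →ₗ[ℚ] H) :
    ∀ i s (q : ℕ → H),
      Gmap t i (pt i (fun m : Fin (i + 1) => q ((m : ℕ) + 1 + s))) = segAux t q i (1 + s) := by
  intro i
  induction i with
  | zero => intro s q; rfl
  | succ i ih =>
    intro s q
    rw [pt_succ_apply, Gmap_succ_apply]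
    have e1 : (fun m : Fin (i + 1) => q (((m.succ : Fin (i + 2)) : ℕ) + 1 + s))
        = fun m : Fin (i + 1) => q ((m : ℕ) + 1 + (s + 1)) := by
      funext m
      congr 1
      simp [Fin.val_succ]
      omega
    rw [e1, ih (s + 1) q]
    show t (segAux t q i (1 + (s + 1))) (q (0 + 1 + s)) = t (segAux t q i (1 + s + 1)) (q (1 + s))
    congr 2 <;> omega

lemma Gmap_pt' (t : H →ₗ[ℚ] H →ₗ[ℚ] H) (i : ℕ) (q : ℕ → H) :
    Gmap t i (pt i (fun m : Fin (i + 1) => q ((m : ℕ) + 1))) = seg t q 1 (i + 1) := by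
  have e1 : (fun m : Fin (i + 1) => q ((m : ℕ) + 1))
      = fun m : Fin (i + 1) => q ((m : ℕ) + 1 + 0) := rfl
  rw [e1, Gmap_pt t i 0 q]
  rfl

lemma im_rec (t : H →ₗ[ℚ] H →ₗ[ℚ] H)
    (hgrowth : ∀ (q : ℕ → H) (m : ℕ), 1 ≤ m →
      (∀ k, 1 ≤ k → k ≤ m → q k ∈ PrimSub) →
      rcomulL (seg t q 1 m)
        = ∑ j ∈ Finset.Icc 1 (m - 1), seg t q (j + 1) m ⊗ₜ[ℚ] seg t q 1 j)
    (i : ℕ) : ∀ y ∈ Im t (i + 1),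
      (∀ k, i < k → Dtil k y = 0) ∧ Gmap t i (Dtil i y) = y := by
  intro y hy
  refine Submodule.span_induction ?_ ?_ ?_ ?_ hy
  · rintro x ⟨q, hq, rfl⟩
    refine ⟨(key t hgrowth i q hq).2, ?_⟩
    rw [(key t hgrowth i q hq).1, Gmap_pt' t i q]
  · exact ⟨fun k _ => by simp, by simp⟩
  · rintro x y _ _ ⟨hx1, hx2⟩ ⟨hy1, hy2⟩
    exact ⟨fun k hk => by simp [hx1 k hk, hy1 k hk], by simp [map_add, hx2, hy2]⟩
  · rintro c x _ ⟨hx1, hx2⟩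
    exact ⟨fun k hk => by simp [hx1 k hk], by simp [map_smul, hx2]⟩



noncomputable def consL (k : ℕ) :
    (PrimSub (H := H) : Type) →ₗ[ℚ]
      (⨂[ℚ] (_ : Fin (k + 1)), (PrimSub (H := H) : Type)) →ₗ[ℚ]
        ⨂[ℚ] (_ : Fin (k + 2)), (PrimSub (H := H) : Type) :=
  (PiTensorProduct.lift).toLinearMap ∘ₗ
    (MultilinearMap.curryLeft
      (PiTensorProduct.tprod ℚ (s := fun _ : Fin (k + 2) => (PrimSub (H := H) : Type))))

lemma consL_tprod (k : ℕ) (p : (PrimSub (H := H) : Type))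
    (v : Fin (k + 1) → (PrimSub (H := H) : Type)) :
    consL k p (PiTensorProduct.tprod ℚ v) = PiTensorProduct.tprod ℚ (Fin.cons p v) := by
  simp [consL, MultilinearMap.curryLeft_apply]

noncomputable def Rmap (r : H →ₗ[ℚ] (PrimSub (H := H) : Type)) :
    (k : ℕ) → (TBundle (H := H) k : Type) →ₗ[ℚ]
      ⨂[ℚ] (_ : Fin (k + 1)), (PrimSub (H := H) : Type)
  | 0 => (PiTensorProduct.subsingletonEquiv (R := ℚ) (0 : Fin 1)).symm.toLinearMap ∘ₗ r
  | k + 1 => TensorProduct.lift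
      ((LinearMap.lcomp ℚ _ r) ∘ₗ ((consL k).flip ∘ₗ Rmap r k))

lemma Rmap_succ_apply (r : H →ₗ[ℚ] (PrimSub (H := H) : Type)) (k : ℕ)
    (x : (TBundle (H := H) k : Type)) (h : H) :
    Rmap r (k + 1) (x ⊗ₜ[ℚ] h) = consL k (r h) (Rmap r k x) := rfl

lemma Rmap_pt (r : H →ₗ[ℚ] (PrimSub (H := H) : Type))
    (hr : ∀ x : (PrimSub (H := H) : Type), r (x : H) = x) :
    ∀ k (q : Fin (k + 1) → (PrimSub (H := H) : Type)),
      Rmap r k (pt k (fun m => (q m : H))) = PiTensorProduct.tprod ℚ q := by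
  intro k
  induction k with
  | zero =>
    intro q
    show (PiTensorProduct.subsingletonEquiv (R := ℚ) (s := fun _ : Fin 1 => (PrimSub (H := H) : Type)) (0 : Fin 1)).symm (r ((q 0 : H))) = _
    rw [hr, LinearEquiv.symm_apply_eq, PiTensorProduct.subsingletonEquiv_apply_tprod]
  | succ k ih =>
    intro q
    rw [pt_succ_apply, Rmap_succ_apply, hr, ih (fun m => q m.succ), consL_tprod]
    congr 1
    exact Fin.cons_self_tail q



/-- For the natural growth operation `⊤ = t` on the Hopf algebra of rooted trees and
`F_i(p_i ⊗ ... ⊗ p_1) = p_i ⊤ ... ⊤ p_1`: `Δ̃^{i−1} ∘ F_i` is the identity on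
`Prim(H_R)^{⊗i}` (identified with its image in `H_R^{⊗i}`), `Δ̃^k ∘ F_i = 0` for
`k > i−1`, each `F_i` is injective, and the sum `ℚ·1 + Σ_{i≥1} Im(F_i)` is direct.
(Here `i` is written as `i+1` so that the statement covers all `i ≥ 1`.) -/
theorem Fi_section_injective_direct
    (t : H →ₗ[ℚ] H →ₗ[ℚ] H)
    -- the iterated natural-growth coproduct formula for primitive elements
    (hgrowth : ∀ (q : ℕ → H) (m : ℕ), 1 ≤ m →
      (∀ k, 1 ≤ k → k ≤ m → q k ∈ PrimSub) →
      rcomulL (seg t q 1 m)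
        = ∑ j ∈ Finset.Icc 1 (m - 1), seg t q (j + 1) m ⊗ₜ[ℚ] seg t q 1 j) :
    -- (a) `Δ̃^{i-1} ∘ F_i = Id` on pure tensors of primitives
    (∀ i : ℕ, ∀ p : ℕ → H, (∀ k, 1 ≤ k → k ≤ i + 1 → p k ∈ PrimSub) →
      Dtil i (seg t p 1 (i + 1)) = pt i (fun m : Fin (i + 1) => p ((m : ℕ) + 1))) ∧
    -- (b) `Δ̃^k ∘ F_i = 0` for `k > i − 1`
    (∀ i : ℕ, ∀ p : ℕ → H, (∀ k, 1 ≤ k → k ≤ i + 1 → p k ∈ PrimSub) →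
      ∀ k : ℕ, i < k → Dtil k (seg t p 1 (i + 1)) = 0) ∧
    -- (c) each `F_i` is injective
    (∀ i : ℕ,
      ∀ F : (⨂[ℚ] (_ : Fin (i + 1)), (PrimSub (H := H) : Type)) →ₗ[ℚ] H,
        (∀ q : Fin (i + 1) → PrimSub (H := H),
          F (PiTensorProduct.tprod ℚ q)
            = seg t (fun m : ℕ =>
                if h : m - 1 < i + 1 then (q ⟨m - 1, h⟩ : H) else 0) 1 (i + 1)) →
        Function.Injective F) ∧
    -- (d) the sum `ℚ·1 + Σ_{i ≥ 1} Im(F_i)` is direct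
    (∀ (c : ℚ) (n : ℕ) (x : ℕ → H),
      (∀ i, 1 ≤ i → i ≤ n → x i ∈ Im t i) →
      c • (1 : H) + ∑ i ∈ Finset.Icc 1 n, x i = 0 →
      c = 0 ∧ ∀ i, 1 ≤ i → i ≤ n → x i = 0) := by
  refine ⟨fun i p hp => (key t hgrowth i p hp).1,
    fun i p hp k hk => (key t hgrowth i p hp).2 k hk, ?_, ?_⟩
  · -- (c) injectivity
    intro i F hF
    obtain ⟨r, hr⟩ := (PrimSub (H := H)).subtype.exists_leftInverse_of_injective
      (Submodule.ker_subtype _)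
    have hr' : ∀ x : (PrimSub (H := H) : Type), r (x : H) = x := fun x => by
      simpa using LinearMap.congr_fun hr x
    have hL : ∀ q : Fin (i + 1) → (PrimSub (H := H) : Type),
        Rmap r i (Dtil i (F (PiTensorProduct.tprod ℚ q))) = PiTensorProduct.tprod ℚ q := by
      intro q
      rw [hF q]
      set p : ℕ → H := fun m => if h : m - 1 < i + 1 then (q ⟨m - 1, h⟩ : H) else 0 with hp
      have hprim : ∀ k, 1 ≤ k → k ≤ i + 1 → p k ∈ PrimSub := by
        intro k h1 h2
        simp only [hp]
        rw [dif_pos (by omega)]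
        exact Submodule.coe_mem _
      rw [(key t hgrowth i p hprim).1]
      have e : (fun m : Fin (i + 1) => p ((m : ℕ) + 1)) = fun m => ((q m : H)) := by
        funext m
        simp only [hp]
        rw [dif_pos (by omega : (m : ℕ) + 1 - 1 < i + 1)]
        congr 1
      rw [e, Rmap_pt r hr' i q]
    have hid : ((Rmap r i ∘ₗ Dtil i) ∘ₗ F) = LinearMap.id := by
      apply PiTensorProduct.ext
      apply MultilinearMap.ext
      intro q
      simpa using hL q
    intro a b hab
    have hz : ∀ z, (Rmap r i ∘ₗ Dtil i) (F z) = z := fun z => by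
      simpa using LinearMap.congr_fun hid z
    calc a = (Rmap r i ∘ₗ Dtil i) (F a) := (hz a).symm
      _ = (Rmap r i ∘ₗ Dtil i) (F b) := by rw [hab]
      _ = b := hz b
  · -- (d) directness
    intro c n x
    induction n generalizing c x with
    | zero =>
      intro hx heq
      rw [show Finset.Icc 1 0 = (∅ : Finset ℕ) from rfl, Finset.sum_empty, add_zero] at heq
      have hc := congrArg (Coalgebra.counit (R := ℚ) (A := H)) heq
      rw [map_smul, Bialgebra.counit_one, smul_eq_mul, mul_one, map_zero] at hc
      exact ⟨hc, fun i h1 h2 => absurd h2 (by omega)⟩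
    | succ n ih =>
      intro hx heq
      rw [Finset.sum_Icc_succ_top (by omega : 1 ≤ n + 1)] at heq
      have hDn : Dtil n (x (n + 1)) = 0 := by
        have h0 := congrArg (Dtil n) heq
        rw [map_zero, map_add, map_add, map_smul, Dtil_one, smul_zero, zero_add, map_sum] at h0
        rw [Finset.sum_eq_zero] at h0
        · rwa [zero_add] at h0
        · intro j hj
          obtain ⟨h1, h2⟩ := Finset.mem_Icc.mp hj
          obtain ⟨j', rfl⟩ : ∃ j', j = j' + 1 := ⟨j - 1, by omega⟩
          exact (im_rec t hgrowth j' (x _) (hx _ h1 (by omega))).1 n (by omega)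
      have hxn : x (n + 1) = 0 := by
        have hrec := (im_rec t hgrowth n (x (n + 1)) (hx (n + 1) (by omega) le_rfl)).2
        rw [← hrec, hDn, map_zero]
      rw [hxn, add_zero] at heq
      obtain ⟨hc, hrest⟩ := ih c x (fun i h1 h2 => hx i h1 (by omega)) heq
      refine ⟨hc, fun i h1 h2 => ?_⟩
      rcases Nat.lt_or_ge i (n + 1) with h | h
      · exact hrest i h1 (by omega)
      · have : i = n + 1 := by omega
        rw [this, hxn]

end
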